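/- arXiv:1611.06460 — 5 statements merged into one kernel-verified Lean document; each statement's English description precedes it below -/
import Mathlib

section
/- If G is a connected graph with a t-split graph G^t, and T is an h-vertex-cut of G, then the set T^t = ∪_{u∈T} V_u is an h-vertex-cut of G^t; consequently κ_s^{(h)}(G^t) ≤ t·κ_s^{(h)}(G). -/
open SimpleGraph

/-- `q` is a swap-neighbor of `p` in the (n,k)-star graph: it is obtained from `p`
by swapping the first digit with the `i`-th digit for some `i ≠ 0`. -/
def swapAdj {n k : ℕ} [NeZero k] (p q : Fin k ↪ Fin n) : Prop :=
  ∃ i : Fin k, i ≠ 0 ∧ q 0 = p i ∧ q i = p 0 ∧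
    ∀ j : Fin k, j ≠ 0 → j ≠ i → q j = p j

/-- `q` is an unswap-neighbor of `p`: obtained by replacing the first digit of `p`
by a symbol not occurring in `p`. -/
def unswapAdj {n k : ℕ} [NeZero k] (p q : Fin k ↪ Fin n) : Prop :=
  (∀ j : Fin k, j ≠ 0 → q j = p j) ∧ ∀ j : Fin k, q 0 ≠ p j

/-- The (n,k)-star graph `S_{n,k}` on the k-arrangements of an n-set. -/
def nkStar (n k : ℕ) [NeZero k] : SimpleGraph (Fin k ↪ Fin n) :=
  SimpleGraph.fromRel (fun p q => swapAdj p q ∨ unswapAdj p q)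

/-- The n-dimensional star graph `S_n` on permutations, adjacency by swapping the
first digit with the `i`-th digit, `i ≠ 0`. -/
def starGraph (n : ℕ) [NeZero n] : SimpleGraph (Equiv.Perm (Fin n)) :=
  SimpleGraph.fromRel (fun p q => ∃ i : Fin n, i ≠ 0 ∧ q = p * Equiv.swap 0 i)

/-- `T` is an h-vertex-cut: `G - T` is disconnected and has minimum degree at least `h`. -/
def IsHVertexCut {V : Type*} (G : SimpleGraph V) (h : ℕ) (T : Set V) : Prop :=
  ¬ (G.induce Tᶜ).Connected ∧ ∀ v, v ∉ T → h ≤ (G.neighborSet v \ T).ncard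

/-- The h-super connectivity `κ_s^{(h)}(G)`. -/
noncomputable def kappaS {V : Type*} (G : SimpleGraph V) (h : ℕ) : ℕ :=
  sInf {m | ∃ T : Set V, IsHVertexCut G h T ∧ T.ncard = m}

/-- `F` is an h-edge-cut: `G - F` is disconnected and has minimum degree at least `h`. -/
def IsHEdgeCut {V : Type*} (G : SimpleGraph V) (h : ℕ) (F : Set (Sym2 V)) : Prop :=
  F ⊆ G.edgeSet ∧ ¬ (G.deleteEdges F).Connected ∧
    ∀ v : V, h ≤ ((G.deleteEdges F).neighborSet v).ncard

/-- The h-super edge-connectivity `λ_s^{(h)}(G)`. -/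
noncomputable def lambdaS {V : Type*} (G : SimpleGraph V) (h : ℕ) : ℕ :=
  sInf {m | ∃ F : Set (Sym2 V), IsHEdgeCut G h F ∧ F.ncard = m}

/-- `G'` together with the projection `π` is a `t`-split graph of `G`: fibers of `π`
have size `t` and are independent, `π` is a graph homomorphism, and over each edge of
`G` the edges of `G'` form a perfect matching between the two fibers. -/
structure IsSplitGraph {V W : Type*} (G : SimpleGraph V) (t : ℕ)
    (G' : SimpleGraph W) (π : W → V) : Prop where
  fiber_card : ∀ v : V, Nat.card (π ⁻¹' {v}) = t
  indep : ∀ x y : W, π x = π y → ¬ G'.Adj x y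
  adj_map : ∀ x y : W, G'.Adj x y → G.Adj (π x) (π y)
  matching : ∀ (x : W) (v : V), G.Adj (π x) v → ∃! z : W, π z = v ∧ G'.Adj x z

/-- The prefix map sending a permutation of `{1,...,n}` to its length-`k` prefix. -/
def prefixMap (n k : ℕ) (hkn : k ≤ n) (p : Equiv.Perm (Fin n)) : Fin k ↪ Fin n :=
  (Fin.castLEEmb hkn).trans p.toEmbedding

/-- The set `X` of k-arrangements whose last `n-1-h` digits are `1,2,...,n-1-h` in order. -/
def lastFixed (n k h : ℕ) : Set (Fin k ↪ Fin n) :=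
  {u | ∀ i : Fin k, k - (n - 1 - h) ≤ i.val → (u i).val = i.val - (k - (n - 1 - h))}

lemma lift_cut {V W : Type*} [Fintype V] [Fintype W]
    (G : SimpleGraph V) (t h : ℕ) (G' : SimpleGraph W) (π : W → V)
    (hsplit : IsSplitGraph G t G' π) (T : Set V) (hT : IsHVertexCut G h T) :
    IsHVertexCut G' h (π ⁻¹' T) := by
  classical
  obtain ⟨hdis, hdeg⟩ := hT
  constructor
  · intro hc
    apply hdis
    obtain ⟨⟨w0, hw0⟩⟩ := hc.nonempty
    have ht1 : 0 < t := by
      rw [← hsplit.fiber_card (π w0)]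
      haveI : Nonempty (π ⁻¹' {π w0}) := ⟨⟨w0, rfl⟩⟩
      exact Nat.card_pos
    have hfib : ∀ v : V, ∃ x : W, π x = v := by
      intro v
      have := hsplit.fiber_card v
      rw [← this] at ht1
      rw [Nat.card_pos_iff] at ht1
      obtain ⟨⟨x, hx⟩⟩ := ht1.1
      exact ⟨x, hx⟩
    let f : (G'.induce (π ⁻¹' T)ᶜ) →g (G.induce Tᶜ) :=
      { toFun := fun x => ⟨π x.1, x.2⟩
        map_rel' := fun {a b} hab => hsplit.adj_map a.1 b.1 hab }
    haveI : Nonempty ↑Tᶜ := ⟨⟨π w0, hw0⟩⟩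
    constructor
    intro a b
    obtain ⟨x, hx⟩ := hfib a.1
    obtain ⟨y, hy⟩ := hfib b.1
    have hxm : x ∈ (π ⁻¹' T)ᶜ := by
      simp only [Set.mem_compl_iff, Set.mem_preimage, hx]; exact a.2
    have hym : y ∈ (π ⁻¹' T)ᶜ := by
      simp only [Set.mem_compl_iff, Set.mem_preimage, hy]; exact b.2
    have hr := hc.preconnected ⟨x, hxm⟩ ⟨y, hym⟩
    have := hr.map f
    have e1 : f ⟨x, hxm⟩ = a := Subtype.ext hx
    have e2 : f ⟨y, hym⟩ = b := Subtype.ext hy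
    rwa [e1, e2] at this
  · intro x hx
    have hx' : π x ∉ T := hx
    have hle := hdeg (π x) hx'
    have key : ∀ v : V, ∃ z : W, v ∈ G.neighborSet (π x) \ T → π z = v ∧ G'.Adj x z := by
      intro v
      by_cases hv : v ∈ G.neighborSet (π x) \ T
      · obtain ⟨z, hz, -⟩ := hsplit.matching x v hv.1
        exact ⟨z, fun _ => hz⟩
      · exact ⟨x, fun h => absurd h hv⟩
    choose f hf using key
    refine le_trans hle (Set.ncard_le_ncard_of_injOn f ?_ ?_ (Set.toFinite _))
    · intro v hv
      obtain ⟨h1, h2⟩ := hf v hv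
      exact ⟨h2, by rw [Set.mem_preimage, h1]; exact hv.2⟩
    · intro v hv v' hv' heq
      rw [← (hf v hv).1, ← (hf v' hv').1, heq]

lemma preimage_ncard {V W : Type*} [Fintype V] [Fintype W]
    (t : ℕ) (π : W → V) (hfc : ∀ v : V, Nat.card (π ⁻¹' {v}) = t)
    (S : Set V) : (π ⁻¹' S).ncard = t * S.ncard := by
  classical
  rw [Set.ncard_eq_toFinset_card', Set.ncard_eq_toFinset_card']
  rw [Finset.card_eq_sum_card_fiberwise (f := π) (t := S.toFinset)
    (fun x hx => by simpa using (Set.mem_toFinset.mp hx))]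
  have hcv : ∀ v ∈ S.toFinset,
      ((π ⁻¹' S).toFinset.filter (fun a => π a = v)).card = t := by
    intro v hv
    have hv' : v ∈ S := Set.mem_toFinset.mp hv
    have : (π ⁻¹' S).toFinset.filter (fun a => π a = v) = (π ⁻¹' {v}).toFinset := by
      ext a
      simp only [Finset.mem_filter, Set.mem_toFinset, Set.mem_preimage, Set.mem_singleton_iff]
      constructor
      · exact fun h => h.2
      · exact fun h => ⟨by rw [h]; exact hv', h⟩
    rw [this, ← Set.ncard_eq_toFinset_card', ← Nat.card_coe_set_eq]
    exact hfc v
  rw [Finset.sum_congr rfl hcv, Finset.sum_const, smul_eq_mul, mul_comm]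

/-- preimages of h-vertex-cuts are h-vertex-cuts of a t-split graph;
consequently κ_s^{(h)}(G^t) ≤ t·κ_s^{(h)}(G). -/
theorem split_vertex_cut {V W : Type*} [Fintype V] [Fintype W]
    (G : SimpleGraph V) (t h : ℕ) (G' : SimpleGraph W) (π : W → V)
    (hsplit : IsSplitGraph G t G' π) (hconn : G.Connected)
    (T : Set V) (hT : IsHVertexCut G h T) :
    IsHVertexCut G' h (π ⁻¹' T) ∧ kappaS G' h ≤ t * kappaS G h := by
  refine ⟨lift_cut G t h G' π hsplit T hT, ?_⟩
  have hne : {m | ∃ T : Set V, IsHVertexCut G h T ∧ T.ncard = m}.Nonempty :=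
    ⟨T.ncard, T, hT, rfl⟩
  obtain ⟨T₀, hT₀, hcard⟩ := Nat.sInf_mem hne
  have hlift := lift_cut G t h G' π hsplit T₀ hT₀
  have hc' : (π ⁻¹' T₀).ncard = t * kappaS G h := by
    rw [preimage_ncard t π hsplit.fiber_card, hcard]; rfl
  exact Nat.sInf_le ⟨π ⁻¹' T₀, hlift, hc'⟩
end

section
/- If G is a connected graph with a t-split graph G^t, and F is an h-edge-cut of G, then F^t = ∪_{e∈F} E_e is an h-edge-cut of G^t; consequently λ_s^{(h)}(G^t) ≤ t·λ_s^{(h)}(G). -/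
open SimpleGraph

lemma split_cut_aux {V W : Type*} [Fintype V] [Fintype W]
    (G : SimpleGraph V) (t h : ℕ) (G' : SimpleGraph W) (π : W → V)
    (hsplit : IsSplitGraph G t G' π)
    (F : Set (Sym2 V)) (hF : IsHEdgeCut G h F) :
    IsHEdgeCut G' h (G'.edgeSet ∩ (Sym2.map π) ⁻¹' F) := by
  classical
  obtain ⟨hFsub, hFdis, hFdeg⟩ := hF
  set F' : Set (Sym2 W) := G'.edgeSet ∩ (Sym2.map π) ⁻¹' F with hF'def
  have hadj : ∀ x y : W, (G'.deleteEdges F').Adj x y → (G.deleteEdges F).Adj (π x) (π y) := by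
    intro x y hxy
    rw [SimpleGraph.deleteEdges_adj] at hxy ⊢
    refine ⟨hsplit.adj_map _ _ hxy.1, fun hmem => hxy.2 ?_⟩
    refine ⟨hxy.1, ?_⟩
    show Sym2.map π s(x, y) ∈ F
    rwa [Sym2.map_pair_eq]
  refine ⟨Set.inter_subset_left, ?_, ?_⟩
  · intro hc
    apply hFdis
    have hW : Nonempty W := hc.nonempty
    have ht : 0 < t := by
      obtain ⟨w⟩ := hW
      have hne : (π ⁻¹' {π w}).Nonempty := ⟨w, rfl⟩
      have := hne.to_subtype
      rw [← hsplit.fiber_card (π w)]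
      exact Nat.card_pos
    have hsurj : ∀ v : V, ∃ x : W, π x = v := by
      intro v
      have h1 : 0 < Nat.card (π ⁻¹' {v}) := by rw [hsplit.fiber_card]; exact ht
      rw [Nat.card_pos_iff] at h1
      obtain ⟨⟨x, hx⟩⟩ := h1.1
      exact ⟨x, hx⟩
    let hom : G'.deleteEdges F' →g G.deleteEdges F := ⟨π, fun {x y} hxy => hadj x y hxy⟩
    have hVne : Nonempty V := ⟨π (Classical.arbitrary W)⟩
    rw [SimpleGraph.connected_iff]
    refine ⟨?_, hVne⟩
    intro u v
    obtain ⟨x, rfl⟩ := hsurj u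
    obtain ⟨y, rfl⟩ := hsurj v
    exact Reachable.map hom (hc.preconnected x y)
  · intro x
    have himg : π '' ((G'.deleteEdges F').neighborSet x)
        = (G.deleteEdges F).neighborSet (π x) := by
      ext v
      constructor
      · rintro ⟨z, hz, rfl⟩
        exact hadj x z hz
      · intro hv
        rw [SimpleGraph.mem_neighborSet, SimpleGraph.deleteEdges_adj] at hv
        obtain ⟨z, ⟨hz1, hz2⟩, -⟩ := hsplit.matching x v hv.1
        refine ⟨z, ?_, hz1⟩
        rw [SimpleGraph.mem_neighborSet, SimpleGraph.deleteEdges_adj]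
        refine ⟨hz2, fun hmem => hv.2 ?_⟩
        have h2 : Sym2.map π s(x, z) ∈ F := hmem.2
        rwa [Sym2.map_pair_eq, hz1] at h2
    have hinj : Set.InjOn π ((G'.deleteEdges F').neighborSet x) := by
      intro z1 h1 z2 h2 heq
      rw [SimpleGraph.mem_neighborSet, SimpleGraph.deleteEdges_adj] at h1 h2
      have hadjG : G.Adj (π x) (π z1) := hsplit.adj_map _ _ h1.1
      obtain ⟨z, -, huniq⟩ := hsplit.matching x (π z1) hadjG
      have e1 : z1 = z := huniq z1 ⟨rfl, h1.1⟩
      have e2 : z2 = z := huniq z2 ⟨heq.symm, h2.1⟩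
      rw [e1, e2]
    calc h ≤ ((G.deleteEdges F).neighborSet (π x)).ncard := hFdeg (π x)
      _ = (π '' ((G'.deleteEdges F').neighborSet x)).ncard := by rw [himg]
      _ = ((G'.deleteEdges F').neighborSet x).ncard := Set.ncard_image_of_injOn hinj

lemma split_count_aux {V W : Type*} [Fintype V] [Fintype W]
    (G : SimpleGraph V) (t : ℕ) (G' : SimpleGraph W) (π : W → V)
    (hsplit : IsSplitGraph G t G' π)
    (F : Set (Sym2 V)) (hFsub : F ⊆ G.edgeSet) :
    (G'.edgeSet ∩ (Sym2.map π) ⁻¹' F).ncard ≤ t * F.ncard := by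
  classical
  set F' : Set (Sym2 W) := G'.edgeSet ∩ (Sym2.map π) ⁻¹' F with hF'def
  have hfin' : F'.Finite := Set.toFinite _
  have hfin : F.Finite := Set.toFinite _
  rw [Set.ncard_eq_toFinset_card F' hfin', Set.ncard_eq_toFinset_card F hfin]
  refine Finset.card_le_mul_card_image_of_maps_to (f := Sym2.map π) ?_ t ?_
  · intro e' he'
    rw [Set.Finite.mem_toFinset] at he' ⊢
    exact he'.2
  · intro e he
    rw [Set.Finite.mem_toFinset] at he
    induction e using Sym2.ind with
    | _ u v =>
      have hadjuv : G.Adj u v := hFsub he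
      have huv : u ≠ v := hadjuv.ne
      -- choice of the endpoint above `u`
      have hgex : ∀ e' ∈ Finset.filter (fun e' => Sym2.map π e' = s(u, v))
          (Set.Finite.toFinset hfin'), ∃ x ∈ e', π x = u := by
        intro e' he'
        rw [Finset.mem_filter] at he'
        have : u ∈ Sym2.map π e' := by rw [he'.2]; exact Sym2.mem_mk_left u v
        exact (Sym2.mem_map).1 this
      set g : Sym2 W → W := fun e' =>
        if hh : ∃ x ∈ e', π x = u then hh.choose else (Quot.out e').1 with hgdef
      have key : ∀ e' ∈ Finset.filter (fun e' => Sym2.map π e' = s(u, v))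
          (Set.Finite.toFinset hfin'),
          ∃ z : W, e' = s(g e', z) ∧ π (g e') = u ∧ π z = v ∧ G'.Adj (g e') z := by
        intro e' he'
        have hh := hgex e' he'
        have hg : g e' = hh.choose := by simp only [hgdef, dif_pos hh]
        obtain ⟨hxmem, hxu⟩ := hh.choose_spec
        rw [Finset.mem_filter, Set.Finite.mem_toFinset] at he'
        set z := Sym2.Mem.other hxmem with hz
        have hspec : s(hh.choose, z) = e' := Sym2.other_spec hxmem
        have hmap : s(π hh.choose, π z) = s(u, v) := by
          rw [← Sym2.map_pair_eq, hspec, he'.2]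
        have hzv : π z = v := by
          rw [Sym2.eq_iff] at hmap
          rcases hmap with ⟨-, h2⟩ | ⟨h1, -⟩
          · exact h2
          · exact absurd (hxu.symm.trans h1) huv
        have hAdj : G'.Adj hh.choose z := by
          have : s(hh.choose, z) ∈ G'.edgeSet := by rw [hspec]; exact he'.1.1
          exact this
        exact ⟨z, by rw [hg, hspec], by rw [hg]; exact hxu, hzv, by rw [hg]; exact hAdj⟩
      have hfu : (π ⁻¹' {u}).Finite := Set.toFinite _
      have hcard : (Set.Finite.toFinset hfu).card = t := by
        rw [← Set.ncard_eq_toFinset_card _ hfu, ← Nat.card_coe_set_eq,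
          hsplit.fiber_card]
      calc (Finset.filter (fun e' => Sym2.map π e' = s(u, v))
            (Set.Finite.toFinset hfin')).card
          ≤ (Set.Finite.toFinset hfu).card := by
            refine Finset.card_le_card_of_injOn g ?_ ?_
            · intro e' he'
              obtain ⟨z, -, hgu, -, -⟩ := key e' he'
              rw [Finset.mem_coe, Set.Finite.mem_toFinset]
              exact hgu
            · intro e1' h1 e2' h2 heq
              simp only [Finset.coe_filter, Set.mem_setOf_eq] at h1 h2
              have h1' : e1' ∈ Finset.filter (fun e' => Sym2.map π e' = s(u, v))
                  (Set.Finite.toFinset hfin') := Finset.mem_filter.2 h1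
              have h2' : e2' ∈ Finset.filter (fun e' => Sym2.map π e' = s(u, v))
                  (Set.Finite.toFinset hfin') := Finset.mem_filter.2 h2
              obtain ⟨z1, he1, hgu1, hzv1, hA1⟩ := key e1' h1'
              obtain ⟨z2, he2, hgu2, hzv2, hA2⟩ := key e2' h2'
              have hadjx : G.Adj (π (g e1')) v := by rw [hgu1]; exact hadjuv
              obtain ⟨z, -, huniq⟩ := hsplit.matching (g e1') v hadjx
              have ez1 : z1 = z := huniq z1 ⟨hzv1, hA1⟩
              have ez2 : z2 = z := huniq z2 ⟨hzv2, by rw [heq]; exact hA2⟩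
              rw [he1, he2, ez1, ez2, heq]
        _ = t := hcard

/-- preimages of h-edge-cuts are h-edge-cuts of a t-split graph;
consequently λ_s^{(h)}(G^t) ≤ t·λ_s^{(h)}(G). -/
theorem split_edge_cut {V W : Type*} [Fintype V] [Fintype W]
    (G : SimpleGraph V) (t h : ℕ) (G' : SimpleGraph W) (π : W → V)
    (hsplit : IsSplitGraph G t G' π) (hconn : G.Connected)
    (F : Set (Sym2 V)) (hF : IsHEdgeCut G h F) :
    IsHEdgeCut G' h (G'.edgeSet ∩ (Sym2.map π) ⁻¹' F) ∧
      lambdaS G' h ≤ t * lambdaS G h := by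
  refine ⟨split_cut_aux G t h G' π hsplit F hF, ?_⟩
  have hne : {m | ∃ F0 : Set (Sym2 V), IsHEdgeCut G h F0 ∧ F0.ncard = m}.Nonempty :=
    ⟨F.ncard, F, hF, rfl⟩
  obtain ⟨F0, hF0, hcard⟩ := Nat.sInf_mem hne
  calc lambdaS G' h ≤ (G'.edgeSet ∩ (Sym2.map π) ⁻¹' F0).ncard :=
        Nat.sInf_le ⟨_, split_cut_aux G t h G' π hsplit F0 hF0, rfl⟩
    _ ≤ t * F0.ncard := split_count_aux G t G' π hsplit F0 hF0.1
    _ = t * lambdaS G h := by rw [hcard]; rfl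
end

section
/- For 2 ≤ k ≤ n−1, there is an (n−k)!-split graph of the (n,k)-star graph S_{n,k} isomorphic to the star graph S_n. Concretely: the map sending a permutation p_1...p_n of {1,...,n} to its prefix p_1...p_k is a graph homomorphism from S_n onto S_{n,k} whose fibers V_u each have size (n−k)!, are independent sets in S_n, and such that for each edge uv of S_{n,k} the edges of S_n between V_u and V_v form a perfect matching. -/
open SimpleGraph

section Helpers

open Equiv Function

lemma prefixMap_apply' {n k : ℕ} (hkn : k ≤ n) (p : Equiv.Perm (Fin n)) (j : Fin k) :
    prefixMap n k hkn p j = p (Fin.castLE hkn j) := rfl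

lemma exists_perm_extend {n k : ℕ} (hkn : k ≤ n) (u : Fin k ↪ Fin n) :
    ∃ p : Equiv.Perm (Fin n), prefixMap n k hkn p = u := by
  classical
  set c : Fin k ↪ Fin n := Fin.castLEEmb hkn with hc
  let e : {x : Fin n // x ∈ Set.range c} ≃ {x : Fin n // x ∈ Set.range u} :=
    c.toEquivRange.symm.trans u.toEquivRange
  refine ⟨e.extendSubtype, DFunLike.ext _ _ fun j => ?_⟩
  have h1 : (c j : Fin n) ∈ Set.range c := ⟨j, rfl⟩
  have h2 : e.extendSubtype (c j) = ((e ⟨c j, h1⟩ : Set.range u) : Fin n) :=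
    e.extendSubtype_apply_of_mem _ h1
  have h3 : e ⟨c j, h1⟩ = ⟨u j, Set.mem_range_self j⟩ := by
    show u.toEquivRange (c.toEquivRange.symm ⟨c j, h1⟩) = _
    rw [show (⟨c j, h1⟩ : Set.range c) = ⟨c j, Set.mem_range_self j⟩ from rfl,
      Function.Embedding.toEquivRange_symm_apply_self, Function.Embedding.toEquivRange_apply]
  show e.extendSubtype (c j) = u j
  rw [h2, h3]

lemma fiber_card_eq {n k : ℕ} (hkn : k ≤ n) (u : Fin k ↪ Fin n) :
    Nat.card (prefixMap n k hkn ⁻¹' {u}) = (n - k).factorial := by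
  classical
  obtain ⟨p₀, hp₀⟩ := exists_perm_extend hkn u
  have key : ∀ p : Equiv.Perm (Fin n),
      prefixMap n k hkn p = u ↔ ∀ a : Fin n, a.val < k → p a = p₀ a := by
    intro p
    constructor
    · intro h a ha
      have h1 := DFunLike.congr_fun h ⟨a.val, ha⟩
      have h2 := DFunLike.congr_fun hp₀ ⟨a.val, ha⟩
      have hca : Fin.castLE hkn ⟨a.val, ha⟩ = a := by ext; simp
      rw [prefixMap_apply', hca] at h1 h2
      rw [h1, h2]
    · intro h
      refine DFunLike.ext _ _ fun j => ?_
      have h2 := DFunLike.congr_fun hp₀ j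
      rw [prefixMap_apply'] at h2 ⊢
      rw [h _ (by simp), h2]
  have e1 : (prefixMap n k hkn ⁻¹' {u}) ≃
      {f : Equiv.Perm (Fin n) // ∀ a : Fin n, ¬ (k ≤ a.val) → f a = a} := by
    refine ⟨fun p => ⟨p₀⁻¹ * p.1, fun a ha => ?_⟩,
      fun f => ⟨p₀ * f.1, ?_⟩, fun p => ?_, fun f => ?_⟩
    · have hp := (key p.1).1 p.2
      rw [Equiv.Perm.mul_apply, hp a (by omega), Equiv.Perm.inv_def, Equiv.symm_apply_apply]
    · show prefixMap n k hkn _ = u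
      rw [key]
      intro a ha
      rw [Equiv.Perm.mul_apply, f.2 a (by omega)]
    · exact Subtype.ext (by simp)
    · exact Subtype.ext (by simp)
  have e2 : {f : Equiv.Perm (Fin n) // ∀ a : Fin n, ¬ (k ≤ a.val) → f a = a} ≃
      Equiv.Perm {a : Fin n // k ≤ a.val} :=
    (Equiv.Perm.subtypeEquivSubtypePerm (fun a : Fin n => k ≤ a.val)).symm
  have e3 : {a : Fin n // k ≤ a.val} ≃ Fin (n - k) := by
    refine ⟨fun a => ⟨a.1.val - k, by have := a.1.isLt; have := a.2; omega⟩,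
      fun b => ⟨⟨b.val + k, by have := b.isLt; omega⟩, by simp⟩, fun a => ?_, fun b => ?_⟩
    · have := a.2
      ext
      simp
      omega
    · ext
      simp
  rw [Nat.card_congr (e1.trans (e2.trans (Equiv.permCongr e3)))]
  simp [Nat.card_eq_fintype_card, Fintype.card_perm]

lemma starGraph_adj_iff {n : ℕ} [NeZero n] {x z : Equiv.Perm (Fin n)} :
    (_root_.starGraph n).Adj x z ↔ ∃ i : Fin n, i ≠ 0 ∧ z = x * Equiv.swap 0 i := by
  rw [_root_.starGraph, SimpleGraph.fromRel_adj]
  constructor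
  · rintro ⟨hne, ⟨i, hi, h⟩ | ⟨i, hi, h⟩⟩
    · exact ⟨i, hi, h⟩
    · refine ⟨i, hi, ?_⟩
      rw [h, mul_assoc, Equiv.swap_mul_self, mul_one]
  · rintro ⟨i, hi, rfl⟩
    refine ⟨fun h => hi ?_, Or.inl ⟨i, hi, rfl⟩⟩
    have h0 : x 0 = (x * Equiv.swap 0 i) 0 := by rw [← h]
    rw [Equiv.Perm.mul_apply, Equiv.swap_apply_left] at h0
    exact (x.injective h0).symm

lemma swapAdj_symm {n k : ℕ} [NeZero k] {p q : Fin k ↪ Fin n} (h : swapAdj p q) :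
    swapAdj q p := by
  obtain ⟨i, hi, h1, h2, h3⟩ := h
  exact ⟨i, hi, h2.symm, h1.symm, fun j hj hji => (h3 j hj hji).symm⟩

lemma unswapAdj_common {n k : ℕ} [NeZero k] {p q : Fin k ↪ Fin n} (h : unswapAdj q p) :
    (∀ j : Fin k, j ≠ 0 → q j = p j) ∧ ∀ j : Fin k, q 0 ≠ p j := by
  obtain ⟨h1, h2⟩ := h
  refine ⟨fun j hj => (h1 j hj).symm, fun j hq => ?_⟩
  rcases eq_or_ne j 0 with rfl | hj
  · exact h2 0 hq.symm
  · rw [h1 j hj] at hq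
    exact (hj (q.injective hq).symm).elim

end Helpers

/-- the prefix map exhibits the star graph `S_n` as an
(n-k)!-split graph of `S_{n,k}`, and it is onto. -/
theorem star_is_split_of_nkStar (n k : ℕ) (hk2 : 2 ≤ k) (hk : k ≤ n - 1) :
    IsSplitGraph (@nkStar n k ⟨by omega⟩) ((n - k).factorial)
      (@starGraph n ⟨by omega⟩) (prefixMap n k (by omega)) ∧
    Function.Surjective (prefixMap n k (by omega)) := by
  have hkn : k ≤ n := by omega
  haveI hNn : NeZero n := ⟨by omega⟩
  haveI hNk : NeZero k := ⟨by omega⟩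
  set c : Fin k → Fin n := Fin.castLE hkn with hcdef
  have hc0 : c 0 = 0 := by ext; simp [hcdef]
  have hcne : ∀ j : Fin k, j ≠ 0 → c j ≠ 0 := by
    intro j hj h
    apply hj
    ext
    have h' := congrArg Fin.val h
    simpa [hcdef] using h'
  have hcinj : Function.Injective c := fun a b h => by
    ext; simpa [hcdef, Fin.ext_iff] using h
  have happly : ∀ (p : Equiv.Perm (Fin n)) (j : Fin k), prefixMap n k hkn p j = p (c j) :=
    fun _ _ => rfl
  refine ⟨⟨fun u => fiber_card_eq hkn u, ?_, ?_, ?_⟩, fun u => exists_perm_extend hkn u⟩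
  · -- indep
    intro x y hxy hadj
    obtain ⟨i, hi, rfl⟩ := starGraph_adj_iff.mp hadj
    have h0 := DFunLike.congr_fun hxy (0 : Fin k)
    rw [happly, happly, hc0, Equiv.Perm.mul_apply, Equiv.swap_apply_left] at h0
    exact hi (x.injective h0).symm
  · -- adj_map
    intro x y hadj
    obtain ⟨i, hi, rfl⟩ := starGraph_adj_iff.mp hadj
    rw [nkStar, SimpleGraph.fromRel_adj]
    have hy0 : prefixMap n k hkn (x * Equiv.swap 0 i) 0 = x i := by
      rw [happly, hc0, Equiv.Perm.mul_apply, Equiv.swap_apply_left]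
    constructor
    · intro h
      have h0 := DFunLike.congr_fun h (0 : Fin k)
      rw [hy0, happly, hc0] at h0
      exact hi (x.injective h0.symm)
    · refine Or.inl ?_
      have hiv : i.val ≠ 0 := fun h => hi (by ext; simp [h])
      by_cases hik : i.val < k
      · refine Or.inl ?_
        refine ⟨⟨i.val, hik⟩, fun h => hiv (by simpa using congrArg Fin.val h), ?_, ?_, ?_⟩
        · rw [hy0, happly]
          exact congrArg x (show c ⟨i.val, hik⟩ = i from by ext; simp [hcdef]).symm
        · rw [happly, happly, hc0, Equiv.Perm.mul_apply,
            show c ⟨i.val, hik⟩ = i from by ext; simp [hcdef], Equiv.swap_apply_right]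
        · intro j hj hji
          rw [happly, happly, Equiv.Perm.mul_apply,
            Equiv.swap_apply_of_ne_of_ne (hcne j hj) ?_]
          intro h
          apply hji
          ext
          simpa [hcdef, Fin.ext_iff] using h
      · refine Or.inr ⟨?_, ?_⟩
        · intro j hj
          rw [happly, happly, Equiv.Perm.mul_apply,
            Equiv.swap_apply_of_ne_of_ne (hcne j hj) ?_]
          intro h
          have hji : (c j).val = i.val := by rw [h]
          have := j.isLt
          simp [hcdef] at hji
          omega
        · intro j
          rw [hy0, happly]
          intro h
          have h' := x.injective h
          have hji : i.val = (c j).val := by rw [h']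
          have := j.isLt
          simp [hcdef] at hji
          omega
  · -- matching
    intro x v hadj
    rw [nkStar, SimpleGraph.fromRel_adj] at hadj
    obtain ⟨hne, hrel⟩ := hadj
    set p : Fin k ↪ Fin n := prefixMap n k hkn x with hp
    have hpx : ∀ j : Fin k, p j = x (c j) := fun _ => rfl
    -- unify the four cases
    have hcases : (∃ i : Fin k, i ≠ 0 ∧ v 0 = p i ∧ v i = p 0 ∧
        ∀ j : Fin k, j ≠ 0 → j ≠ i → v j = p j) ∨
        ((∀ j : Fin k, j ≠ 0 → v j = p j) ∧ ∀ j : Fin k, v 0 ≠ p j) := by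
      rcases hrel with (hs | hu) | (hs | hu)
      · obtain ⟨i, hi, h1, h2, h3⟩ := swapAdj_symm hs
        exact Or.inl ⟨i, hi, h2.symm, h1.symm, fun j hj hji => (h3 j hj hji).symm⟩
      · exact Or.inr hu
      · obtain ⟨i, hi, h1, h2, h3⟩ := hs
        exact Or.inl ⟨i, hi, h2.symm, h1.symm, fun j hj hji => (h3 j hj hji).symm⟩
      · exact Or.inr (unswapAdj_common hu)
    set m : Fin n := x.symm (v 0) with hm
    have hxm : x m = v 0 := x.apply_symm_apply _
    have hm0 : m ≠ 0 := by
      intro h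
      rw [h] at hxm
      rcases hcases with ⟨i, hi, h1, _, _⟩ | ⟨_, h2⟩
      · rw [h1, hpx] at hxm
        exact hcne i hi (x.injective hxm.symm)
      · exact h2 0 (by rw [← hxm, hpx, hc0])
    have hπ : prefixMap n k hkn (x * Equiv.swap 0 m) = v := by
      refine DFunLike.ext _ _ fun j => ?_
      rcases eq_or_ne j 0 with rfl | hj
      · rw [happly, hc0, Equiv.Perm.mul_apply, Equiv.swap_apply_left, hxm]
      · rcases hcases with ⟨i, hi, h1, h2, h3⟩ | ⟨h1, h2⟩
        · have hmi : m = c i := by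
            apply x.injective
            rw [hxm, h1, hpx]
          rcases eq_or_ne j i with rfl | hji
          · rw [happly, hmi, Equiv.Perm.mul_apply, Equiv.swap_apply_right, h2, hpx, hc0]
          · rw [happly, Equiv.Perm.mul_apply,
              Equiv.swap_apply_of_ne_of_ne (hcne j hj) (fun h => hji (hcinj (h.trans hmi))),
              h3 j hj hji, hpx]
        · have hmk : k ≤ m.val := by
            by_contra h
            push_neg at h
            have : m = c ⟨m.val, h⟩ := by ext; simp [hcdef]
            exact h2 ⟨m.val, h⟩ (by rw [← hxm, hpx]; exact congrArg x this)
          rw [happly, Equiv.Perm.mul_apply,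
            Equiv.swap_apply_of_ne_of_ne (hcne j hj) ?_, h1 j hj, hpx]
          intro h
          have hjm : (c j).val = m.val := by rw [h]
          have := j.isLt
          simp [hcdef] at hjm
          omega
    refine ⟨x * Equiv.swap 0 m, ⟨hπ, starGraph_adj_iff.mpr ⟨m, hm0, rfl⟩⟩, ?_⟩
    rintro z ⟨hπz, hadjz⟩
    obtain ⟨i, hi, rfl⟩ := starGraph_adj_iff.mp hadjz
    have h0 := DFunLike.congr_fun hπz (0 : Fin k)
    rw [happly, hc0, Equiv.Perm.mul_apply, Equiv.swap_apply_left] at h0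
    have : i = m := x.injective (by rw [h0, hxm])
    rw [this]
end

section
/- For 2 ≤ k ≤ n−1 and n−k ≤ h ≤ n−2, the h-super connectivity of the (n,k)-star graph satisfies κ_s^{(h)}(S_{n,k}) ≤ (h+1)!(n−h−1)/(n−k)!. -/
open SimpleGraph

section NKProof

variable {n k h : ℕ}

lemma nkStar_adj [NeZero k] {p q : Fin k ↪ Fin n} :
    (nkStar n k).Adj p q ↔
      p ≠ q ∧ ((swapAdj p q ∨ unswapAdj p q) ∨ (swapAdj q p ∨ unswapAdj q p)) := by
  simp [nkStar, SimpleGraph.fromRel_adj]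

/-- swap positions 0 and i of an arrangement -/
def swapEmb [NeZero k] (p : Fin k ↪ Fin n) (i : Fin k) : Fin k ↪ Fin n :=
  (Equiv.swap 0 i).toEmbedding.trans p

@[simp] lemma swapEmb_zero [NeZero k] (p : Fin k ↪ Fin n) (i : Fin k) :
    swapEmb p i 0 = p i := by
  simp [swapEmb]

@[simp] lemma swapEmb_apply_i [NeZero k] (p : Fin k ↪ Fin n) (i : Fin k) :
    swapEmb p i i = p 0 := by
  simp [swapEmb]

lemma swapEmb_other [NeZero k] (p : Fin k ↪ Fin n) {i j : Fin k} (hj0 : j ≠ 0) (hji : j ≠ i) :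
    swapEmb p i j = p j := by
  simp [swapEmb, Equiv.swap_apply_of_ne_of_ne hj0 hji]

lemma swapEmb_invol [NeZero k] (p : Fin k ↪ Fin n) (i : Fin k) :
    swapEmb (swapEmb p i) i = p := by
  apply Function.Embedding.ext
  intro j
  simp [swapEmb, Equiv.swap_apply_self]

/-- the characterization predicate for members of the boundary `bigT` -/
def tchar (n k h : ℕ) [NeZero k] (w : Fin k ↪ Fin n) (i : Fin k) : Prop :=
  k - (n - 1 - h) ≤ i.val ∧ (n - 1 - h) ≤ (w i).val ∧
    (w 0).val = i.val - (k - (n - 1 - h)) ∧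
    ∀ j : Fin k, k - (n - 1 - h) ≤ j.val → j ≠ i → (w j).val = j.val - (k - (n - 1 - h))

/-- the cut: the outer boundary of `lastFixed` -/
def bigT (n k h : ℕ) [NeZero k] : Set (Fin k ↪ Fin n) :=
  {w | w ∉ lastFixed n k h ∧ ∃ x ∈ lastFixed n k h, (nkStar n k).Adj x w}

lemma free_big [NeZero k] (hk2 : 2 ≤ k) (hk : k ≤ n - 1) (h1 : n - k ≤ h) (h2 : h ≤ n - 2)
    {x : Fin k ↪ Fin n} (hx : x ∈ lastFixed n k h) {j : Fin k}
    (hj : j.val < k - (n - 1 - h)) : n - 1 - h ≤ (x j).val := by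
  by_contra hc
  push_neg at hc
  have hlt : k - (n - 1 - h) + (x j).val < k := by omega
  have h2' := hx ⟨k - (n - 1 - h) + (x j).val, hlt⟩ (by simp)
  have hval : (x ⟨k - (n - 1 - h) + (x j).val, hlt⟩).val = (x j).val := by
    simp only at h2'
    omega
  have hxx := x.injective (Fin.val_injective hval)
  have := congrArg Fin.val hxx
  simp only at this
  omega

lemma tchar_unique [NeZero k] (hk2 : 2 ≤ k) (hk : k ≤ n - 1) (h1 : n - k ≤ h) (h2 : h ≤ n - 2)
    {w : Fin k ↪ Fin n} {i i' : Fin k}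
    (hi : tchar n k h w i) (hi' : tchar n k h w i') : i = i' := by
  by_contra hne
  have e1 := hi.2.2.2 i' hi'.1 (fun hx => hne hx.symm)
  have e2 := hi'.2.1
  have := i'.isLt
  omega

end NKProof
section NKProof2

variable {n k h : ℕ}

lemma fin_ne_zero_of_val [NeZero k] {j : Fin k} (hj : 0 < j.val) : j ≠ 0 := by
  intro he
  rw [he] at hj
  simp at hj

lemma mem_bigT_iff [NeZero k] (hk2 : 2 ≤ k) (hk : k ≤ n - 1) (h1 : n - k ≤ h) (h2 : h ≤ n - 2)
    {w : Fin k ↪ Fin n} : w ∈ bigT n k h ↔ ∃ i, tchar n k h w i := by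
  constructor
  · rintro ⟨hwX, x, hx, hadj⟩
    rw [nkStar_adj] at hadj
    obtain ⟨hne, hrel⟩ := hadj
    have key : ∀ i : Fin k, i ≠ 0 → w 0 = x i → w i = x 0 →
        (∀ j : Fin k, j ≠ 0 → j ≠ i → w j = x j) → ∃ i, tchar n k h w i := by
      intro i hi0 hw0 hwi hrest
      by_cases him : k - (n - 1 - h) ≤ i.val
      · refine ⟨i, him, ?_, ?_, ?_⟩
        · rw [hwi]
          exact free_big hk2 hk h1 h2 hx (by simp; omega)
        · rw [hw0]; exact hx i him
        · intro j hj hji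
          have hj0 : j ≠ 0 := fin_ne_zero_of_val (by omega)
          rw [hrest j hj0 hji]
          exact hx j hj
      · exfalso
        apply hwX
        intro j hj
        have hj0 : j ≠ 0 := fin_ne_zero_of_val (by omega)
        have hji : j ≠ i := by intro he; rw [he] at hj; omega
        rw [hrest j hj0 hji]
        exact hx j hj
    have keyU : (∀ j : Fin k, j ≠ 0 → w j = x j) → ∃ i, tchar n k h w i := by
      intro hrest
      exfalso
      apply hwX
      intro j hj
      have hj0 : j ≠ 0 := fin_ne_zero_of_val (by omega)
      rw [hrest j hj0]
      exact hx j hj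
    rcases hrel with (⟨i, hi0, hw0, hwi, hrest⟩ | ⟨hrest, -⟩) |
      (⟨i, hi0, hx0, hxi, hrest⟩ | ⟨hrest, -⟩)
    · exact key i hi0 hw0 hwi hrest
    · exact keyU hrest
    · exact key i hi0 hxi.symm hx0.symm (fun j h1 h2 => (hrest j h1 h2).symm)
    · exact keyU (fun j hj => (hrest j hj).symm)
  · rintro ⟨i, him, hbig, h0, hrest⟩
    have hi0 : i ≠ 0 := fin_ne_zero_of_val (by omega)
    have hin := i.isLt
    constructor
    · intro hX
      have := hX i him
      omega
    · refine ⟨swapEmb w i, ?_, ?_⟩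
      · intro j hj
        by_cases hji : j = i
        · subst hji
          rw [swapEmb_apply_i]
          omega
        · rw [swapEmb_other w (fin_ne_zero_of_val (by omega)) hji]
          exact hrest j hj hji
      · rw [nkStar_adj]
        constructor
        · intro heq
          have := congrArg (fun f : Fin k ↪ Fin n => f i) heq
          simp only [swapEmb_apply_i] at this
          have := w.injective this
          rw [← this] at hi0
          exact hi0 rfl
        · refine Or.inl (Or.inl ⟨i, hi0, ?_, ?_, ?_⟩)
          · rw [swapEmb_apply_i]
          · rw [swapEmb_zero]
          · intro j hj0 hji
            rw [swapEmb_other w hj0 hji]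

lemma decomp [NeZero k] (hk2 : 2 ≤ k) (hk : k ≤ n - 1) (h1 : n - k ≤ h) (h2 : h ≤ n - 2)
    {v w : Fin k ↪ Fin n} {i : Fin k}
    (hvX : v ∉ lastFixed n k h) (ht : tchar n k h w i) (hadj : (nkStar n k).Adj v w) :
    (∀ j : Fin k, j ≠ 0 → w j = v j) ∨
    (∃ s : Fin k, s ≠ 0 ∧ s ≠ i ∧ w 0 = v s ∧ w s = v 0 ∧
      ∀ j : Fin k, j ≠ 0 → j ≠ s → w j = v j) := by
  rw [nkStar_adj] at hadj
  obtain ⟨hne, hrel⟩ := hadj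
  have key : ∀ s : Fin k, s ≠ 0 → w 0 = v s → w s = v 0 →
      (∀ j : Fin k, j ≠ 0 → j ≠ s → w j = v j) →
      ((∀ j : Fin k, j ≠ 0 → w j = v j) ∨
        (∃ s : Fin k, s ≠ 0 ∧ s ≠ i ∧ w 0 = v s ∧ w s = v 0 ∧
          ∀ j : Fin k, j ≠ 0 → j ≠ s → w j = v j)) := by
    intro s hs0 hw0 hws hrest
    by_cases hsi : s = i
    · exfalso
      apply hvX
      subst hsi
      intro j hj
      by_cases hji : j = s
      · subst hji
        rw [← hw0]
        exact ht.2.2.1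
      · have hj0 : j ≠ 0 := fin_ne_zero_of_val (by omega)
        rw [← hrest j hj0 hji]
        exact ht.2.2.2 j hj hji
    · exact Or.inr ⟨s, hs0, hsi, hw0, hws, hrest⟩
  rcases hrel with (⟨s, hs0, hw0, hws, hrest⟩ | ⟨hrest, -⟩) |
    (⟨s, hs0, hv0, hvs, hrest⟩ | ⟨hrest, -⟩)
  · exact key s hs0 hw0 hws hrest
  · exact Or.inl hrest
  · exact key s hs0 hvs.symm hv0.symm (fun j ha hb => (hrest j ha hb).symm)
  · exact Or.inl (fun j hj => (hrest j hj).symm)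

lemma vprofile [NeZero k] (hk2 : 2 ≤ k) (hk : k ≤ n - 1) (h1 : n - k ≤ h) (h2 : h ≤ n - 2)
    {v w : Fin k ↪ Fin n} {i : Fin k} (ht : tchar n k h w i)
    (hd : (∀ j : Fin k, j ≠ 0 → w j = v j) ∨
      (∃ s : Fin k, s ≠ 0 ∧ s ≠ i ∧ w 0 = v s ∧ w s = v 0 ∧
        ∀ j : Fin k, j ≠ 0 → j ≠ s → w j = v j)) :
    (n - 1 - h) ≤ (v i).val ∧
      ∀ j : Fin k, k - (n - 1 - h) ≤ j.val → j ≠ i → (v j).val < n - 1 - h := by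
  have hi0 : i ≠ 0 := fin_ne_zero_of_val (by have := ht.1; omega)
  rcases hd with hd | ⟨s, hs0, hsi, hw0, hws, hrest⟩
  · constructor
    · rw [← hd i hi0]; exact ht.2.1
    · intro j hj hji
      have hj0 : j ≠ 0 := fin_ne_zero_of_val (by omega)
      rw [← hd j hj0]
      have := ht.2.2.2 j hj hji
      have := j.isLt
      omega
  · constructor
    · rw [← hrest i hi0 (fun he => hsi he.symm)]
      exact ht.2.1
    · intro j hj hji
      have hj0 : j ≠ 0 := fin_ne_zero_of_val (by omega)
      by_cases hjs : j = s
      · subst hjs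
        rw [← hw0]
        have := ht.2.2.1
        have := i.isLt
        omega
      · rw [← hrest j hj0 hjs]
        have := ht.2.2.2 j hj hji
        have := j.isLt
        omega

lemma nbr_unique [NeZero k] (hk2 : 2 ≤ k) (hk : k ≤ n - 1) (h1 : n - k ≤ h) (h2 : h ≤ n - 2)
    {v w w' : Fin k ↪ Fin n}
    (hvX : v ∉ lastFixed n k h) (hw : w ∈ bigT n k h) (hw' : w' ∈ bigT n k h)
    (ha : (nkStar n k).Adj v w) (ha' : (nkStar n k).Adj v w') : w = w' := by
  obtain ⟨i, ht⟩ := (mem_bigT_iff hk2 hk h1 h2).mp hw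
  obtain ⟨i', ht'⟩ := (mem_bigT_iff hk2 hk h1 h2).mp hw'
  have hd := decomp hk2 hk h1 h2 hvX ht ha
  have hd' := decomp hk2 hk h1 h2 hvX ht' ha'
  have hp := vprofile hk2 hk h1 h2 ht hd
  have hp' := vprofile hk2 hk h1 h2 ht' hd'
  have hii : i = i' := by
    by_contra hne
    have e1 := hp.2 i' ht'.1 (fun he => hne he.symm)
    have e2 := hp'.1
    omega
  subst hii
  rcases hd with hd | ⟨s, hs0, hsi, hw0, hws, hrest⟩ <;>
    rcases hd' with hd' | ⟨s', hs0', hsi', hw0', hws', hrest'⟩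
  · apply Function.Embedding.ext
    intro j
    by_cases hj : j = 0
    · subst hj
      apply Fin.val_injective
      rw [ht.2.2.1, ht'.2.2.1]
    · rw [hd j hj, hd' j hj]
  · exfalso
    have h1' : (w s').val = (w 0).val := by
      rw [hd s' hs0', ← hw0', ht'.2.2.1, ht.2.2.1]
    exact hs0' (w.injective (Fin.val_injective h1'))
  · exfalso
    have h1' : (w' s).val = (w' 0).val := by
      rw [hd' s hs0, ← hw0, ht.2.2.1, ht'.2.2.1]
    exact hs0 (w'.injective (Fin.val_injective h1'))
  · have hss : s = s' := by
      apply v.injective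
      apply Fin.val_injective
      rw [← hw0, ← hw0', ht.2.2.1, ht'.2.2.1]
    subst hss
    apply Function.Embedding.ext
    intro j
    by_cases hj0 : j = 0
    · subst hj0; rw [hw0, hw0']
    by_cases hjs : j = s
    · subst hjs; rw [hws, hws']
    · rw [hrest j hj0 hjs, hrest' j hj0 hjs]

lemma adjX [NeZero k] (hk2 : 2 ≤ k) (hk : k ≤ n - 1) (h1 : n - k ≤ h) (h2 : h ≤ n - 2)
    {v w : Fin k ↪ Fin n} (hv : v ∈ lastFixed n k h) (hw : w ∈ bigT n k h)
    (ha : (nkStar n k).Adj v w) :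
    ∃ s : Fin k, k - (n - 1 - h) ≤ s.val ∧ w 0 = v s ∧ w s = v 0 ∧
      ∀ j : Fin k, j ≠ 0 → j ≠ s → w j = v j := by
  rw [nkStar_adj] at ha
  obtain ⟨hne, hrel⟩ := ha
  have keyU : ¬ (∀ j : Fin k, j ≠ 0 → w j = v j) := by
    intro hrest
    apply hw.1
    intro j hj
    have hj0 : j ≠ 0 := fin_ne_zero_of_val (by omega)
    rw [hrest j hj0]
    exact hv j hj
  have key : ∀ s : Fin k, s ≠ 0 → w 0 = v s → w s = v 0 →
      (∀ j : Fin k, j ≠ 0 → j ≠ s → w j = v j) →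
      (∃ s : Fin k, k - (n - 1 - h) ≤ s.val ∧ w 0 = v s ∧ w s = v 0 ∧
        ∀ j : Fin k, j ≠ 0 → j ≠ s → w j = v j) := by
    intro s hs0 hw0 hws hrest
    by_cases hsm : k - (n - 1 - h) ≤ s.val
    · exact ⟨s, hsm, hw0, hws, hrest⟩
    · exfalso
      apply hw.1
      intro j hj
      have hj0 : j ≠ 0 := fin_ne_zero_of_val (by omega)
      have hjs : j ≠ s := by intro he; rw [he] at hj; omega
      rw [hrest j hj0 hjs]
      exact hv j hj
  rcases hrel with (⟨s, hs0, hw0, hws, hrest⟩ | ⟨hrest, -⟩) |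
    (⟨s, hs0, hv0, hvs, hrest⟩ | ⟨hrest, -⟩)
  · exact key s hs0 hw0 hws hrest
  · exact absurd hrest keyU
  · exact key s hs0 hvs.symm hv0.symm (fun j ha hb => (hrest j ha hb).symm)
  · exact absurd (fun j hj => (hrest j hj).symm) keyU

end NKProof2
section NKProof3

variable {n k h : ℕ}

/-- the neighbor of `v` whose first digit is `a` -/
def nbr [NeZero k] (v : Fin k ↪ Fin n) (a : Fin n) (ha : a ≠ v 0) : Fin k ↪ Fin n where
  toFun j := if j = 0 then a else if v j = a then v 0 else v j
  inj' := by
    intro j j' hh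
    dsimp only at hh
    by_cases hj : j = 0 <;> by_cases hj' : j' = 0
    · rw [hj, hj']
    · exfalso
      rw [if_pos hj, if_neg hj'] at hh
      by_cases h2 : v j' = a
      · rw [if_pos h2] at hh; exact ha hh
      · rw [if_neg h2] at hh; exact h2 hh.symm
    · exfalso
      rw [if_neg hj, if_pos hj'] at hh
      by_cases h2 : v j = a
      · rw [if_pos h2] at hh; exact ha hh.symm
      · rw [if_neg h2] at hh; exact h2 hh
    · rw [if_neg hj, if_neg hj'] at hh
      by_cases h2 : v j = a <;> by_cases h2' : v j' = a
      · rw [← h2'] at h2; exact v.injective h2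
      · rw [if_pos h2, if_neg h2'] at hh
        exact absurd (v.injective hh.symm) hj'
      · rw [if_neg h2, if_pos h2'] at hh
        exact absurd (v.injective hh) hj
      · rw [if_neg h2, if_neg h2'] at hh
        exact v.injective hh

@[simp] lemma nbr_zero [NeZero k] (v : Fin k ↪ Fin n) (a : Fin n) (ha : a ≠ v 0) :
    nbr v a ha 0 = a := by
  show (if (0 : Fin k) = 0 then a else if v 0 = a then v 0 else v 0) = a
  exact if_pos rfl

lemma nbr_tail [NeZero k] (v : Fin k ↪ Fin n) (a : Fin n) (ha : a ≠ v 0) {j : Fin k}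
    (hj : j ≠ 0) (hja : v j ≠ a) : nbr v a ha j = v j := by
  show (if j = 0 then a else if v j = a then v 0 else v j) = v j
  rw [if_neg hj, if_neg hja]

lemma nbr_adj [NeZero k] (v : Fin k ↪ Fin n) (a : Fin n) (ha : a ≠ v 0) :
    (nkStar n k).Adj v (nbr v a ha) := by
  rw [nkStar_adj]
  constructor
  · intro he
    apply ha
    rw [he, nbr_zero]
  · by_cases hex : ∃ s : Fin k, s ≠ 0 ∧ v s = a
    · obtain ⟨s, hs0, hsa⟩ := hex
      refine Or.inl (Or.inl ⟨s, hs0, ?_, ?_, ?_⟩)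
      · rw [nbr_zero, hsa]
      · show (if s = 0 then a else if v s = a then v 0 else v s) = v 0
        rw [if_neg hs0, if_pos hsa]
      · intro j hj0 hjs
        refine nbr_tail v a ha hj0 ?_
        intro he
        rw [← hsa] at he
        exact hjs (v.injective he)
    · push_neg at hex
      refine Or.inl (Or.inr ⟨?_, ?_⟩)
      · intro j hj0
        exact nbr_tail v a ha hj0 (hex j hj0)
      · intro j
        rw [nbr_zero]
        by_cases hj0 : j = 0
        · rw [hj0]; exact ha
        · exact fun he => (hex j hj0) he.symm

lemma finiteV : Finite (Fin k ↪ Fin n) := by infer_instance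

lemma deg_lb [NeZero k] (hk2 : 2 ≤ k) (hk : k ≤ n - 1) (h1 : n - k ≤ h) (h2 : h ≤ n - 2)
    (v : Fin k ↪ Fin n) : n - 1 ≤ ((nkStar n k).neighborSet v).ncard := by
  classical
  have hn3 : 3 ≤ n := by omega
  let f : ({v 0}ᶜ : Set (Fin n)) → ((nkStar n k).neighborSet v) := fun a =>
    ⟨nbr v a.val (Set.mem_compl_singleton_iff.mp a.2), nbr_adj v a.val _⟩
  have hf : Function.Injective f := by
    intro a a' he
    have := congrArg (fun z : ((nkStar n k).neighborSet v) => z.val 0) he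
    simp only [f, nbr_zero] at this
    exact Subtype.ext this
  have hcard := Nat.card_le_card_of_injective f hf
  rw [Nat.card_coe_set_eq, Nat.card_coe_set_eq] at hcard
  have hcompl : ({v 0}ᶜ : Set (Fin n)).ncard = n - 1 := by
    rw [Set.compl_eq_univ_diff, Set.ncard_diff_singleton_of_mem (Set.mem_univ _),
      Set.ncard_univ, Nat.card_eq_fintype_card, Fintype.card_fin]
  omega

lemma X_deg [NeZero k] (hk2 : 2 ≤ k) (hk : k ≤ n - 1) (h1 : n - k ≤ h) (h2 : h ≤ n - 2)
    {v : Fin k ↪ Fin n} (hv : v ∈ lastFixed n k h) :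
    h ≤ ((nkStar n k).neighborSet v \ bigT n k h).ncard := by
  classical
  have hv0 : n - 1 - h ≤ (v 0).val := free_big hk2 hk h1 h2 hv (by simp; omega)
  have hvlt := (v 0).isLt
  let gv : Fin h → ℕ := fun t =>
    if (n - 1 - h) + t.val < (v 0).val then (n - 1 - h) + t.val else (n - 1 - h) + t.val + 1
  have hgvlt : ∀ t : Fin h, gv t < n := by
    intro t
    have := t.isLt
    simp only [gv]
    split <;> omega
  let g : Fin h → Fin n := fun t => ⟨gv t, hgvlt t⟩
  have hgval : ∀ t : Fin h, (g t).val = gv t := fun t => rfl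
  have hge : ∀ t : Fin h, n - 1 - h ≤ (g t).val := by
    intro t
    rw [hgval]
    simp only [gv]
    split <;> omega
  have hne : ∀ t : Fin h, g t ≠ v 0 := by
    intro t he
    have h5 := congrArg Fin.val he
    rw [hgval] at h5
    simp only [gv] at h5
    split at h5 <;> omega
  have hginj : Function.Injective g := by
    intro t t' he
    have h5 := congrArg Fin.val he
    rw [hgval, hgval] at h5
    simp only [gv] at h5
    apply Fin.val_injective
    split at h5 <;> split at h5 <;> omega
  have hmemX : ∀ t : Fin h, nbr v (g t) (hne t) ∈ lastFixed n k h := by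
    intro t j hj
    have hj0 : j ≠ 0 := fin_ne_zero_of_val (by omega)
    have hvj : v j ≠ g t := by
      intro he
      have h3 := hv j hj
      have h4 := hge t
      have := j.isLt
      rw [he] at h3
      omega
    rw [nbr_tail v (g t) (hne t) hj0 hvj]
    exact hv j hj
  let F : Fin h → ((nkStar n k).neighborSet v \ bigT n k h : Set (Fin k ↪ Fin n)) := fun t =>
    ⟨nbr v (g t) (hne t), ⟨nbr_adj v (g t) (hne t), fun hT => hT.1 (hmemX t)⟩⟩
  have hF : Function.Injective F := by
    intro t t' he
    have := congrArg (fun z : ((nkStar n k).neighborSet v \ bigT n k h : Set (Fin k ↪ Fin n)) =>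
      z.val 0) he
    simp only [F, nbr_zero] at this
    exact hginj this
  have hcard := Nat.card_le_card_of_injective F hF
  rw [Nat.card_coe_set_eq, Nat.card_eq_fintype_card, Fintype.card_fin] at hcard
  exact hcard

lemma nX_deg [NeZero k] (hk2 : 2 ≤ k) (hk : k ≤ n - 1) (h1 : n - k ≤ h) (h2 : h ≤ n - 2)
    {v : Fin k ↪ Fin n} (hvX : v ∉ lastFixed n k h) (hvT : v ∉ bigT n k h) :
    h ≤ ((nkStar n k).neighborSet v \ bigT n k h).ncard := by
  classical
  have hdeg := deg_lb hk2 hk h1 h2 v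
  by_cases hE : ∃ w0, w0 ∈ (nkStar n k).neighborSet v ∧ w0 ∈ bigT n k h
  · obtain ⟨w0, hw0n, hw0T⟩ := hE
    have heq : (nkStar n k).neighborSet v \ bigT n k h =
        (nkStar n k).neighborSet v \ {w0} := by
      ext w
      simp only [Set.mem_diff, Set.mem_singleton_iff]
      constructor
      · rintro ⟨h3, h4⟩
        exact ⟨h3, fun he => h4 (he ▸ hw0T)⟩
      · rintro ⟨h3, h4⟩
        refine ⟨h3, fun hT => h4 ?_⟩
        exact nbr_unique hk2 hk h1 h2 hvX hT hw0T h3 hw0n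
    rw [heq, Set.ncard_diff_singleton_of_mem hw0n]
    omega
  · push_neg at hE
    have heq : (nkStar n k).neighborSet v \ bigT n k h = (nkStar n k).neighborSet v := by
      ext w
      simp only [Set.mem_diff]
      exact ⟨fun hh => hh.1, fun hh => ⟨hh, hE w hh⟩⟩
    rw [heq]
    omega

end NKProof3
section NKProof4

variable {n k h : ℕ}

def aFun (n k h : ℕ) : Fin k → ℕ := fun j =>
  if j.val < k - (n - 1 - h) then (n - 1 - h) + j.val else j.val - (k - (n - 1 - h))

lemma aFun_lt (hk2 : 2 ≤ k) (hk : k ≤ n - 1) (h1 : n - k ≤ h) (h2 : h ≤ n - 2)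
    (j : Fin k) : aFun n k h j < k := by
  have := j.isLt
  simp only [aFun]
  split <;> omega

def aEmb (hk2 : 2 ≤ k) (hk : k ≤ n - 1) (h1 : n - k ≤ h) (h2 : h ≤ n - 2) :
    Fin k ↪ Fin n where
  toFun j := ⟨aFun n k h j, by have := aFun_lt hk2 hk h1 h2 j; omega⟩
  inj' := by
    intro j j' he
    have h5 := congrArg Fin.val he
    simp only [aFun] at h5
    apply Fin.val_injective
    split at h5 <;> split at h5 <;> omega

lemma aEmb_mem (hk2 : 2 ≤ k) (hk : k ≤ n - 1) (h1 : n - k ≤ h) (h2 : h ≤ n - 2) :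
    aEmb hk2 hk h1 h2 ∈ lastFixed n k h := by
  intro j hj
  show aFun n k h j = _
  simp only [aFun]
  rw [if_neg (by omega)]

def bEmb (hk2 : 2 ≤ k) (hk : k ≤ n - 1) (h1 : n - k ≤ h) (h2 : h ≤ n - 2) :
    Fin k ↪ Fin n where
  toFun j := if j.val = k - 1 then ⟨k, by omega⟩ else ⟨aFun n k h j, by have := aFun_lt hk2 hk h1 h2 j; omega⟩
  inj' := by
    intro j j' he
    have h5 := congrArg Fin.val he
    dsimp only at h5
    have ha := aFun_lt hk2 hk h1 h2 j
    have ha' := aFun_lt hk2 hk h1 h2 j'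
    apply Fin.val_injective
    split at h5 <;> split at h5
    · omega
    · simp only [] at h5; omega
    · simp only [] at h5; omega
    · simp only [aFun] at h5
      split at h5 <;> split at h5 <;> omega

lemma bEmb_val (hk2 : 2 ≤ k) (hk : k ≤ n - 1) (h1 : n - k ≤ h) (h2 : h ≤ n - 2) (j : Fin k) :
    (bEmb hk2 hk h1 h2 j).val = if j.val = k - 1 then k else aFun n k h j := by
  show (if j.val = k - 1 then (⟨k, by omega⟩ : Fin n) else ⟨aFun n k h j, by have := aFun_lt hk2 hk h1 h2 j; omega⟩).val = _
  split <;> rfl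

lemma bEmb_not_memX (hk2 : 2 ≤ k) (hk : k ≤ n - 1) (h1 : n - k ≤ h) (h2 : h ≤ n - 2) :
    bEmb hk2 hk h1 h2 ∉ lastFixed n k h := by
  intro hb
  set jlast : Fin k := ⟨k - 1, by omega⟩ with hjl
  have h7 : jlast.val = k - 1 := rfl
  have h5 := hb jlast (by omega)
  rw [bEmb_val, h7, if_pos rfl] at h5
  omega

lemma bEmb_not_memT [NeZero k] (hk2 : 2 ≤ k) (hk : k ≤ n - 1) (h1 : n - k ≤ h) (h2 : h ≤ n - 2) :
    bEmb hk2 hk h1 h2 ∉ bigT n k h := by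
  intro hb
  obtain ⟨i, ht⟩ := (mem_bigT_iff hk2 hk h1 h2).mp hb
  have h5 := ht.2.2.1
  have h6 := i.isLt
  have h7 := ht.1
  rw [bEmb_val] at h5
  have h8 : (0 : Fin k).val = 0 := by simp
  rw [h8] at h5
  rw [if_neg (by omega)] at h5
  simp only [aFun] at h5
  rw [if_pos (by omega)] at h5
  omega

lemma not_conn (hk2 : 2 ≤ k) (hk : k ≤ n - 1) (h1 : n - k ≤ h) (h2 : h ≤ n - 2) [NeZero k] :
    ¬ ((nkStar n k).induce (bigT n k h)ᶜ).Connected := by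
  intro hc
  have haT : (aEmb hk2 hk h1 h2 : Fin k ↪ Fin n) ∈ (bigT n k h)ᶜ := by
    intro hT
    exact hT.1 (aEmb_mem hk2 hk h1 h2)
  have hbT : (bEmb hk2 hk h1 h2 : Fin k ↪ Fin n) ∈ (bigT n k h)ᶜ :=
    bEmb_not_memT hk2 hk h1 h2
  have hr := hc.preconnected ⟨aEmb hk2 hk h1 h2, haT⟩ ⟨bEmb hk2 hk h1 h2, hbT⟩
  obtain ⟨p⟩ := hr
  have key : ∀ (u uu : ((bigT n k h)ᶜ : Set (Fin k ↪ Fin n)))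
      (_ : ((nkStar n k).induce (bigT n k h)ᶜ).Walk u uu),
      u.val ∈ lastFixed n k h → uu.val ∈ lastFixed n k h := by
    intro u uu p
    induction p with
    | nil => exact id
    | @cons x y z ha _ ih =>
      intro hx
      apply ih
      by_contra hy
      have hadj : (nkStar n k).Adj x.val y.val := ha
      exact y.2 ⟨hy, x.val, hx, hadj⟩
  exact bEmb_not_memX hk2 hk h1 h2 (key _ _ p (aEmb_mem hk2 hk h1 h2))

lemma the_cut (hk2 : 2 ≤ k) (hk : k ≤ n - 1) (h1 : n - k ≤ h) (h2 : h ≤ n - 2) [NeZero k] :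
    IsHVertexCut (nkStar n k) h (bigT n k h) := by
  constructor
  · exact not_conn hk2 hk h1 h2
  · intro v hv
    by_cases hvX : v ∈ lastFixed n k h
    · exact X_deg hk2 hk h1 h2 hvX
    · exact nX_deg hk2 hk h1 h2 hvX hv

end NKProof4
section NKProof5

variable {n k h : ℕ}

set_option maxHeartbeats 1000000 in
lemma bigT_card [NeZero k] (hk2 : 2 ≤ k) (hk : k ≤ n - 1) (h1 : n - k ≤ h) (h2 : h ≤ n - 2) :
    (bigT n k h).ncard ≤ (n - 1 - h) * ((h + 1).descFactorial (k - (n - 1 - h))) := by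
  classical
  have hch : ∀ w : ↥(bigT n k h), ∃ i, tchar n k h w.val i :=
    fun w => (mem_bigT_iff hk2 hk h1 h2).mp w.2
  choose idx hidx using hch
  have hXmem : ∀ w : ↥(bigT n k h),
      swapEmb w.val (idx w) ∈ lastFixed n k h := by
    intro w j hj
    by_cases hji : j = idx w
    · subst hji
      rw [swapEmb_apply_i]
      exact (hidx w).2.2.1
    · rw [swapEmb_other w.val (fin_ne_zero_of_val (by omega)) hji]
      exact (hidx w).2.2.2 j hj hji
  have hfree : ∀ (w : ↥(bigT n k h)) (j : Fin k),
      j.val < k - (n - 1 - h) → n - 1 - h ≤ (swapEmb w.val (idx w) j).val :=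
    fun w j hj => free_big hk2 hk h1 h2 (hXmem w) hj
  let Φ : ↥(bigT n k h) →
      Fin (n - 1 - h) × (Fin (k - (n - 1 - h)) ↪ Fin (h + 1)) := fun w =>
    ⟨⟨(idx w).val - (k - (n - 1 - h)), by have := (idx w).isLt; omega⟩,
     ⟨fun j => ⟨(swapEmb w.val (idx w) ⟨j.val, by have := j.isLt; omega⟩).val - (n - 1 - h),
        by
          have := (swapEmb w.val (idx w) ⟨j.val, by have := j.isLt; omega⟩).isLt
          omega⟩,
      by
        intro j j' he
        have h5 := congrArg Fin.val he
        dsimp only at h5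
        have hb := hfree w ⟨j.val, by have := j.isLt; omega⟩ (by exact j.isLt)
        have hb' := hfree w ⟨j'.val, by have := j'.isLt; omega⟩ (by exact j'.isLt)
        have h6 : (swapEmb w.val (idx w) ⟨j.val, by have := j.isLt; omega⟩).val =
            (swapEmb w.val (idx w) ⟨j'.val, by have := j'.isLt; omega⟩).val := by omega
        have h7 := (swapEmb w.val (idx w)).injective (Fin.val_injective h6)
        have h8 := congrArg Fin.val h7
        dsimp only at h8
        exact Fin.val_injective h8⟩⟩
  have hΦ : Function.Injective Φ := by
    intro w w' he
    have h5 := congrArg Prod.fst he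
    have h6 := congrArg Prod.snd he
    dsimp only [Φ] at h5 h6
    have hval := congrArg Fin.val h5
    dsimp only at hval
    have hii : idx w = idx w' := by
      apply Fin.val_injective
      have := (hidx w).1
      have := (hidx w').1
      omega
    have hxx : swapEmb w.val (idx w) = swapEmb w'.val (idx w') := by
      apply Function.Embedding.ext
      intro j
      by_cases hj : j.val < k - (n - 1 - h)
      · have h7 := congrArg (fun f : Fin (k - (n - 1 - h)) ↪ Fin (h + 1) =>
          (f ⟨j.val, hj⟩).val) h6
        have hb : n - 1 - h ≤ (swapEmb w.val (idx w) j).val := hfree w j hj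
        have hb' : n - 1 - h ≤ (swapEmb w'.val (idx w') j).val := hfree w' j hj
        have h7' : (swapEmb w.val (idx w) j).val - (n - 1 - h)
            = (swapEmb w'.val (idx w') j).val - (n - 1 - h) := h7
        apply Fin.val_injective
        omega
      · apply Fin.val_injective
        rw [hXmem w j (by omega), hXmem w' j (by omega)]
    have := congrArg (fun x : Fin k ↪ Fin n => swapEmb x (idx w)) hxx
    rw [swapEmb_invol, hii, swapEmb_invol] at this
    exact Subtype.ext this
  have hcard := Nat.card_le_card_of_injective Φ hΦ
  rw [Nat.card_coe_set_eq, Nat.card_eq_fintype_card, Fintype.card_prod,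
    Fintype.card_fin, Fintype.card_embedding_eq, Fintype.card_fin, Fintype.card_fin] at hcard
  exact hcard

lemma arith_eq (hk2 : 2 ≤ k) (hk : k ≤ n - 1) (h1 : n - k ≤ h) (h2 : h ≤ n - 2) :
    (n - 1 - h) * ((h + 1).descFactorial (k - (n - 1 - h)))
      = (h + 1).factorial * (n - h - 1) / (n - k).factorial := by
  rw [Nat.descFactorial_eq_div (by omega : k - (n - 1 - h) ≤ h + 1)]
  have he : h + 1 - (k - (n - 1 - h)) = n - k := by omega
  rw [he]
  have hd : (n - k).factorial ∣ (h + 1).factorial := Nat.factorial_dvd_factorial (by omega)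
  rw [← Nat.mul_div_assoc _ hd]
  have he2 : (n - 1 - h) * (h + 1).factorial = (h + 1).factorial * (n - h - 1) := by
    rw [mul_comm]
    congr 1
    omega
  rw [he2]

end NKProof5
/-- κ_s^{(h)}(S_{n,k}) ≤ (h+1)!(n-h-1)/(n-k)! for
2 ≤ k ≤ n-1 and n-k ≤ h ≤ n-2. -/
theorem kappa_upper (n k h : ℕ) (hk2 : 2 ≤ k) (hk : k ≤ n - 1)
    (h1 : n - k ≤ h) (h2 : h ≤ n - 2) :
    kappaS (@nkStar n k ⟨by omega⟩) h
      ≤ (h + 1).factorial * (n - h - 1) / (n - k).factorial := by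
  haveI : NeZero k := ⟨by omega⟩
  have hcut : IsHVertexCut (nkStar n k) h (bigT n k h) := the_cut hk2 hk h1 h2
  have hb : (bigT n k h).ncard ≤ (h + 1).factorial * (n - h - 1) / (n - k).factorial := by
    calc (bigT n k h).ncard ≤ (n - 1 - h) * ((h + 1).descFactorial (k - (n - 1 - h))) :=
          bigT_card hk2 hk h1 h2
      _ = (h + 1).factorial * (n - h - 1) / (n - k).factorial := arith_eq hk2 hk h1 h2
  have hmem : (bigT n k h).ncard ∈
      {m | ∃ T : Set (Fin k ↪ Fin n), IsHVertexCut (nkStar n k) h T ∧ T.ncard = m} :=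
    ⟨bigT n k h, hcut, rfl⟩
  exact le_trans (Nat.sInf_le hmem) hb
end

section
/- The (n,k)-star graph S_{n,k} is vertex-transitive for 1 ≤ k ≤ n−1: for any two vertices u, v of S_{n,k} there is a graph automorphism of S_{n,k} mapping u to v. -/
open SimpleGraph

lemma exists_perm_comp {n k : ℕ} (u v : Fin k ↪ Fin n) :
    ∃ σ : Equiv.Perm (Fin n), ∀ i, σ (u i) = v i := by
  classical
  have hcard : Fintype.card (↥(Set.range ⇑u)ᶜ) = Fintype.card (↥(Set.range ⇑v)ᶜ) := by
    rw [Fintype.card_compl_set, Fintype.card_compl_set,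
      Set.card_range_of_injective u.injective, Set.card_range_of_injective v.injective]
  let e : (Set.range ⇑u) ≃ (Set.range ⇑v) :=
    (Equiv.ofInjective _ u.injective).symm.trans (Equiv.ofInjective _ v.injective)
  let f := Fintype.equivOfCardEq hcard
  refine ⟨(Equiv.Set.sumCompl (Set.range ⇑u)).symm.trans
    ((e.sumCongr f).trans (Equiv.Set.sumCompl (Set.range ⇑v))), ?_⟩
  intro i
  have h1 : (Equiv.Set.sumCompl (Set.range ⇑u)).symm (u i) = Sum.inl ⟨u i, ⟨i, rfl⟩⟩ :=
    Equiv.Set.sumCompl_symm_apply (s := Set.range ⇑u) (x := ⟨u i, ⟨i, rfl⟩⟩)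
  simp [h1, e, Equiv.ofInjective_symm_apply]

/-- Post-composition with a permutation as an equiv on embeddings. -/
def compPerm {n k : ℕ} (σ : Equiv.Perm (Fin n)) : (Fin k ↪ Fin n) ≃ (Fin k ↪ Fin n) where
  toFun p := p.trans σ.toEmbedding
  invFun p := p.trans σ.symm.toEmbedding
  left_inv p := by ext j; simp
  right_inv p := by ext j; simp

lemma swapAdj_compPerm {n k : ℕ} [NeZero k] (σ : Equiv.Perm (Fin n)) (p q : Fin k ↪ Fin n) :
    swapAdj (compPerm σ p) (compPerm σ q) ↔ swapAdj p q := by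
  simp [swapAdj, compPerm, σ.apply_eq_iff_eq]

lemma unswapAdj_compPerm {n k : ℕ} [NeZero k] (σ : Equiv.Perm (Fin n)) (p q : Fin k ↪ Fin n) :
    unswapAdj (compPerm σ p) (compPerm σ q) ↔ unswapAdj p q := by
  simp [unswapAdj, compPerm, σ.apply_eq_iff_eq, σ.injective.ne_iff]

/-- Post-composition with a permutation is an automorphism of the (n,k)-star graph. -/
def compPermIso {n k : ℕ} [NeZero k] (σ : Equiv.Perm (Fin n)) :
    nkStar n k ≃g nkStar n k where
  toEquiv := compPerm σ
  map_rel_iff' := by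
    intro p q
    simp only [nkStar, SimpleGraph.fromRel_adj]
    rw [swapAdj_compPerm, swapAdj_compPerm, unswapAdj_compPerm, unswapAdj_compPerm,
      (compPerm σ).injective.ne_iff]

/-- `S_{n,k}` is vertex-transitive for 1 ≤ k ≤ n-1. -/
theorem nkStar_vertex_transitive (n k : ℕ) (hk1 : 1 ≤ k) (hk : k ≤ n - 1)
    (u v : Fin k ↪ Fin n) :
    ∃ φ : @nkStar n k ⟨by omega⟩ ≃g @nkStar n k ⟨by omega⟩, φ u = v := by
  haveI : NeZero k := ⟨by omega⟩
  obtain ⟨σ, hσ⟩ := exists_perm_comp u v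
  exact ⟨compPermIso σ, Function.Embedding.ext hσ⟩
end
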